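/- Let A be a ring, (B_i)_{i ∈ I} a family of A-algebras, and Y a quasiseparated A-scheme. Then the natural map Y(∏_{i∈I} B_i) → ∏_{i∈I} Y(B_i) is injective. -/

import Mathlib

set_option maxHeartbeats 1000000
set_option synthInstance.maxHeartbeats 100000


open AlgebraicGeometry CategoryTheory

/-- The set `Y(B)` of `A`-morphisms `Spec B → Y`, for `Y` a scheme over `Spec A`. -/
def SchemePoints (A : Type u) [CommRing A] (Y : Scheme.{u})
    (sY : Y ⟶ Spec (CommRingCat.of A)) (B : Type u) [CommRing B] [Algebra A B] : Type u :=
  { f : Spec (CommRingCat.of B) ⟶ Y //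
      f ≫ sY = Spec.map (CommRingCat.ofHom (algebraMap A B)) }

/-- The natural map `Y(∏ᵢ Bᵢ) → Y(Bᵢ)` induced by the projection `∏ᵢ Bᵢ → Bᵢ`. -/
noncomputable def SchemePoints.component (A : Type u) [CommRing A] (Y : Scheme.{u})
    (sY : Y ⟶ Spec (CommRingCat.of A)) {I : Type u}
    (B : I → Type u) [∀ i, CommRing (B i)] [∀ i, Algebra A (B i)]
    (f : SchemePoints A Y sY (Π i, B i)) (i : I) : SchemePoints A Y sY (B i) :=
  ⟨Spec.map (CommRingCat.ofHom (Pi.evalRingHom B i)) ≫ f.1, by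
    rw [Category.assoc, f.2, ← Spec.map_comp]
    rfl⟩

open CategoryTheory.Limits in
/-- Two morphisms from `Spec (∏ i, B i)` to a quasiseparated scheme `Y` agreeing on each
`Spec (B i)` are equal. -/
theorem spec_pi_hom_ext {Y : Scheme.{u}} [QuasiSeparatedSpace Y] {I : Type u}
    (B : I → Type u) [∀ i, CommRing (B i)]
    (f g : Spec (CommRingCat.of (Π i, B i)) ⟶ Y)
    (h : ∀ i, Spec.map (CommRingCat.ofHom (Pi.evalRingHom B i)) ≫ f
        = Spec.map (CommRingCat.ofHom (Pi.evalRingHom B i)) ≫ g) : f = g := by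
  classical
  -- the diagonal of `Y` is a quasicompact immersion
  haveI hqs : QuasiSeparated (terminal.from Y) :=
    (quasiSeparatedSpace_iff_quasiSeparated Y).mp ‹_›
  have hdiag : prod.lift (𝟙 Y) (𝟙 Y) ≫ (prodIsoPullback Y Y).hom
      = pullback.diagonal (terminal.from Y) := by
    apply pullback.hom_ext <;> simp
    · exact prod.lift_fst _ _
    · exact prod.lift_snd _ _
  haveI hd1 : QuasiCompact (prod.lift (𝟙 Y) (𝟙 Y)) := by
    exact (quasiSeparatedSpace_iff_quasiCompact_prod_lift (X := Y)).mp ‹_›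
  haveI hd2 : IsImmersion (prod.lift (𝟙 Y) (𝟙 Y)) := by
    infer_instance
  -- hence so is the equalizer of `f` and `g`
  set E : Scheme.{u} := equalizer f g with hE
  set ι : E ⟶ Spec (CommRingCat.of (Π i, B i)) := equalizer.ι f g with hι
  haveI h1 : QuasiCompact ι :=
    MorphismProperty.of_isPullback (isPullback_equalizer_prod f g).flip hd1
  haveI h2 : IsImmersion ι :=
    MorphismProperty.of_isPullback (isPullback_equalizer_prod f g).flip hd2
  haveI hEc : CompactSpace E := QuasiCompact.compactSpace_of_compactSpace ι
  -- the map on global sections is injective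
  set ψ : CommRingCat.of (Π i, B i) ⟶ Γ(E, ⊤) := (Scheme.ΓSpecIso (CommRingCat.of (Π i, B i))).inv ≫ ι.appTop with hψdef
  have hψ : Function.Injective ψ := by
    rw [injective_iff_map_eq_zero]
    intro x hx
    funext i
    have hcomp : Spec.map (CommRingCat.ofHom (Pi.evalRingHom B i))
        = equalizer.lift (Spec.map (CommRingCat.ofHom (Pi.evalRingHom B i))) (h i) ≫ ι := by
      rw [hι]; exact (equalizer.lift_ι _ _).symm
    have key : CommRingCat.ofHom (Pi.evalRingHom B i)
        ≫ (Scheme.ΓSpecIso (CommRingCat.of (B i))).inv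
        = ψ ≫ (equalizer.lift
            (Spec.map (CommRingCat.ofHom (Pi.evalRingHom B i))) (h i)).appTop := by
      rw [Scheme.ΓSpecIso_inv_naturality, hψdef, Category.assoc, ← Scheme.Hom.comp_appTop, ← hcomp]
    have hkey : (Scheme.ΓSpecIso (CommRingCat.of (B i))).inv ((Pi.evalRingHom B i) x)
        = (equalizer.lift
            (Spec.map (CommRingCat.ofHom (Pi.evalRingHom B i))) (h i)).appTop (ψ x) :=
      congrArg (fun φ => φ x) key
    rw [hx, map_zero] at hkey
    have hinj : Function.Injective (Scheme.ΓSpecIso (CommRingCat.of (B i))).inv :=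
      ((ConcreteCategory.isIso_iff_bijective _).mp inferInstance).injective
    have h0 : (Pi.evalRingHom B i) x = 0 := by
      apply hinj
      rw [map_zero]
      exact hkey
    exact h0
  -- the range of `ι` is dense
  have hclos : closure (Set.range ι.base) = Set.univ := by
    erw [← PrimeSpectrum.zeroLocus_vanishingIdeal_eq_closure, Set.eq_univ_iff_forall]
    intro p
    rw [PrimeSpectrum.mem_zeroLocus]
    intro r hr
    have hb : E.basicOpen (ψ r) = ⊥ := by
      have hpre : ι ⁻¹ᵁ PrimeSpectrum.basicOpen r = E.basicOpen (ψ r) := by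
        rw [← basicOpen_eq_of_affine]
        exact Scheme.preimage_basicOpen_top ι _
      rw [← hpre, eq_bot_iff]
      intro x hx
      have hx' : ι.base x ∈ PrimeSpectrum.basicOpen r := hx
      exact absurd ((PrimeSpectrum.mem_vanishingIdeal _ _).mp hr (ι.base x)
        (Set.mem_range_self x)) ((PrimeSpectrum.mem_basicOpen _ _).mp hx')
    have hnil : IsNilpotent (ψ r) := (Scheme.isNilpotent_iff_basicOpen_eq_bot (ψ r)).mpr hb
    obtain ⟨n, hn⟩ := hnil
    have hrn : r ^ n = 0 := by
      apply hψ
      rw [map_pow, map_zero]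
      exact hn
    exact p.2.mem_of_pow_mem n (hrn ▸ p.asIdeal.zero_mem)
  -- the range of `ι` is open and compact
  have hopen : IsOpen (Set.range ι.base) := by
    have h3 := h2.isLocallyClosed_range.isOpen_coborder
    rw [coborder, hclos] at h3
    simpa [Set.diff_eq, Set.compl_inter, compl_compl] using h3
  have hcpt : IsCompact (Set.range ι.base) := by
    rw [show Set.range ι.base = ι.base '' Set.univ from Set.image_univ.symm]
    exact CompactSpace.isCompact_univ.image ι.continuous
  -- and therefore equal to everything
  obtain ⟨J, ⟨t, htJ⟩, hJr⟩ := PrimeSpectrum.isCompact_isOpen_iff_ideal.mp ⟨hcpt, hopen⟩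
  have hmap : ∀ i, J.map (Pi.evalRingHom B i) = ⊤ := by
    intro i
    rcases subsingleton_or_nontrivial (B i) with hs | hs
    · exact Subsingleton.elim _ _
    by_contra hne
    obtain ⟨m, hm, hle⟩ := Ideal.exists_le_maximal _ hne
    have hcomp : Spec.map (CommRingCat.ofHom (Pi.evalRingHom B i))
        = equalizer.lift (Spec.map (CommRingCat.ofHom (Pi.evalRingHom B i))) (h i) ≫ ι := by
      rw [hι]; exact (equalizer.lift_ι _ _).symm
    have hmem : (Spec.map (CommRingCat.ofHom (Pi.evalRingHom B i))).base ⟨m, hm.isPrime⟩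
        ∈ Set.range ι.base := by
      rw [hcomp]
      exact ⟨_, rfl⟩
    rw [← hJr] at hmem
    apply hmem
    erw [PrimeSpectrum.mem_zeroLocus]
    exact fun a ha => Ideal.map_le_iff_le_comap.mp hle ha
  have h1J : (1 : Π i, B i) ∈ J := by
    haveI : Fintype (↑(↑t : Set ↑(CommRingCat.of (Π i, B i))) : Type u) :=
      t.finite_toSet.fintype
    have key : ∀ i, ∃ c : (↑t : Set ↑(CommRingCat.of (Π i, B i))) → B i,
        ∑ a, c a * (Pi.evalRingHom B i) a.1 = 1 := by
      intro i
      have h1m : (1 : B i) ∈ J.map (Pi.evalRingHom B i) := by rw [hmap i]; trivial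
      rw [← htJ, Ideal.map_span, Set.image_eq_range] at h1m
      obtain ⟨c, hcs⟩ := Ideal.mem_span_range_iff_exists_fun.mp h1m
      exact ⟨c, by simpa using hcs⟩
    choose c hc using key
    have h1eq : (1 : Π i, B i) = ∑ a, (fun i => c i a) * (show Π i, B i from a.1) := by
      funext j
      rw [Finset.sum_apply]
      simpa using (hc j).symm
    rw [h1eq]
    exact Ideal.sum_mem _ fun a _ =>
      Ideal.mul_mem_left _ _ (htJ ▸ Ideal.subset_span a.2)
  have hsurj : Set.range ι.base = Set.univ := by
    rw [← hJr, PrimeSpectrum.zeroLocus_empty_of_one_mem h1J, Set.compl_empty]; rfl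
  -- so `ι` is a surjective closed immersion with injective `appTop`, hence an isomorphism
  haveI hci : IsClosedImmersion ι :=
    IsClosedImmersion.of_isPreimmersion ι (by rw [hsurj]; exact isClosed_univ)
  have happ : Function.Injective ι.appTop := by
    have heq : (Scheme.ΓSpecIso (CommRingCat.of (Π i, B i))).hom ≫ ψ = ι.appTop := by
      rw [hψdef, Iso.hom_inv_id_assoc]
    rw [← heq, ConcreteCategory.coe_comp]
    exact hψ.comp ((ConcreteCategory.isIso_iff_bijective _).mp inferInstance).injective
  haveI := IsClosedImmersion.isIso_of_injective_of_isAffine (f := ι) happ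
  rw [← cancel_epi ι, hι]
  exact equalizer.condition f g

/-- For a quasiseparated scheme `Y` over `Spec A` and a family `(Bᵢ)` of `A`-algebras, the
natural map `Y(∏ᵢ Bᵢ) → ∏ᵢ Y(Bᵢ)` is injective. -/
theorem points_of_product_injective_of_quasiSeparated
    (A : Type u) [CommRing A] (Y : Scheme.{u}) (sY : Y ⟶ Spec (CommRingCat.of A))
    [QuasiSeparatedSpace Y] (I : Type u) (B : I → Type u) [∀ i, CommRing (B i)] [∀ i, Algebra A (B i)] :
    Function.Injective
      (fun f : SchemePoints A Y sY (Π i, B i) =>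
        fun i : I => SchemePoints.component A Y sY B f i) := by
  intro f g hfg
  apply Subtype.ext
  apply spec_pi_hom_ext B f.1 g.1
  intro i
  exact congrArg Subtype.val (congrFun hfg i)
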